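/- Let ∇ be a connection on (0,∞)×(0,2π)×(0,π) in coordinates (r,φ,ϑ) whose nonzero components are ∇^1_{11} = A¹₁₁(r), ∇^2_{12} = ∇^3_{13} = A²₁₂(r), ∇^1_{22} = −(L/K)A²₁₂(r)exp(2∫₁^r(A²₁₂−A¹₁₁)), ∇^1_{33} = sin²ϑ·∇^1_{22}, ∇^2_{33} = −sin ϑ cos ϑ, ∇^3_{23} = cot ϑ, where K,L are nonzero reals and A¹₁₁, A²₁₂ are continuous. Then the metric g = P(r)dr⊗dr + Q(r)(dϑ⊗dϑ + sin²ϑ dφ⊗dφ) with P(r) = K exp(2∫₁^r A¹₁₁), Q(r) = L exp(2∫₁^r A²₁₂) satisfies the metrizability equations ∂g_{ij}/∂x^k = g_{im}∇^m_{jk} + g_{jm}∇^m_{ik} for all i,j,k. -/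

import Mathlib

open scoped BigOperators

/-- Partial derivative of a real function on `ℝ³` in the `j`-th coordinate direction. -/
noncomputable def pd (f : (Fin 3 → ℝ) → ℝ) (j : Fin 3) (x : Fin 3 → ℝ) : ℝ :=
  fderiv ℝ f x (Pi.single j 1)

/-- The open box `(0,∞) × (0,π) × (0,2π)` in `(r, ϑ, φ)`-space (coordinates indexed so
that `x¹ = r`, `x² = ϑ`, `x³ = φ`, following the paper's component labels). -/
def sphDom : Set (Fin 3 → ℝ) :=
  {p | 0 < p 0 ∧ p 1 ∈ Set.Ioo 0 Real.pi ∧ p 2 ∈ Set.Ioo 0 (2 * Real.pi)}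

/-- The connection of Theorem 11: nonzero components `∇^1_{11} = A¹₁₁(r)`,
`∇^2_{12} = ∇^3_{13} = A²₁₂(r)`, `∇^1_{22} = −(L/K)A²₁₂(r)exp(2∫₁^r(A²₁₂−A¹₁₁))`,
`∇^1_{33} = sin²ϑ·∇^1_{22}`, `∇^2_{33} = −sin ϑ cos ϑ`, `∇^3_{23} = cot ϑ`
(together with their symmetric counterparts in the lower indices). -/
noncomputable def metrConn (A111 A212 : ℝ → ℝ) (K L : ℝ)
    (p : Fin 3 → ℝ) (i : Fin 3) : Matrix (Fin 3) (Fin 3) ℝ :=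
  let N : ℝ := -(L / K) * A212 (p 0) *
    Real.exp (2 * ∫ t in (1:ℝ)..(p 0), (A212 t - A111 t))
  ![!![A111 (p 0), 0, 0; 0, N, 0; 0, 0, Real.sin (p 1) ^ 2 * N],
    !![0, A212 (p 0), 0; A212 (p 0), 0, 0; 0, 0, -(Real.sin (p 1) * Real.cos (p 1))],
    !![0, 0, A212 (p 0); 0, 0, Real.cos (p 1) / Real.sin (p 1);
       A212 (p 0), Real.cos (p 1) / Real.sin (p 1), 0]] i

/-- The metric `g = P(r) dr⊗dr + Q(r)(dϑ⊗dϑ + sin²ϑ dφ⊗dφ)` of Theorem 12, with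
`P(r) = K exp(2∫₁^r A¹₁₁)` and `Q(r) = L exp(2∫₁^r A²₁₂)`. -/
noncomputable def metrG (A111 A212 : ℝ → ℝ) (K L : ℝ)
    (p : Fin 3 → ℝ) : Matrix (Fin 3) (Fin 3) ℝ :=
  Matrix.diagonal
    ![K * Real.exp (2 * ∫ t in (1:ℝ)..(p 0), A111 t),
      L * Real.exp (2 * ∫ t in (1:ℝ)..(p 0), A212 t),
      (L * Real.exp (2 * ∫ t in (1:ℝ)..(p 0), A212 t)) * Real.sin (p 1) ^ 2]

section Helpers
open MeasureTheory

private lemma intInt (A : ℝ → ℝ) (h : ContinuousOn A (Set.Ioi 0)) {r : ℝ} (hr : 0 < r) :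
    IntervalIntegrable A volume 1 r :=
  (h.mono (Set.ordConnected_Ioi.uIcc_subset (Set.mem_Ioi.2 one_pos)
    (Set.mem_Ioi.2 hr))).intervalIntegrable

private lemma primDeriv (A : ℝ → ℝ) (h : ContinuousOn A (Set.Ioi 0)) {r : ℝ} (hr : 0 < r) :
    HasDerivAt (fun s => ∫ t in (1:ℝ)..s, A t) (A r) r :=
  intervalIntegral.integral_hasDerivAt_right (intInt A h hr)
    (h.stronglyMeasurableAtFilter (μ := volume) isOpen_Ioi r hr)
    (h.continuousAt (Ioi_mem_nhds hr))

private lemma pd_const (c : ℝ) (k : Fin 3) (p : Fin 3 → ℝ) : pd (fun _ => c) k p = 0 := by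
  simp [pd]

private lemma hFexp (A : ℝ → ℝ) (K : ℝ) {p : Fin 3 → ℝ}
    (hd : HasDerivAt (fun s => ∫ t in (1:ℝ)..s, A t) (A (p 0)) (p 0)) :
    HasFDerivAt (fun q : Fin 3 → ℝ => K * Real.exp (2 * ∫ t in (1:ℝ)..q 0, A t))
      ((K * Real.exp (2 * ∫ t in (1:ℝ)..p 0, A t) * (2 * A (p 0))) •
        ContinuousLinearMap.proj (R := ℝ) (φ := fun _ : Fin 3 => ℝ) 0) p := by
  have hd2 : HasDerivAt (fun s : ℝ => K * Real.exp (2 * ∫ t in (1:ℝ)..s, A t))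
      (K * Real.exp (2 * ∫ t in (1:ℝ)..p 0, A t) * (2 * A (p 0))) (p 0) := by
    have := ((hd.const_mul 2).exp).const_mul K
    exact this.congr_deriv (by ring)
  have := hd2.comp_hasFDerivAt p
    (ContinuousLinearMap.proj (R := ℝ) (φ := fun _ : Fin 3 => ℝ) 0).hasFDerivAt
  exact this

private lemma pdExp (A : ℝ → ℝ) (K : ℝ) {p : Fin 3 → ℝ}
    (hd : HasDerivAt (fun s => ∫ t in (1:ℝ)..s, A t) (A (p 0)) (p 0)) (k : Fin 3) :
    pd (fun q => K * Real.exp (2 * ∫ t in (1:ℝ)..q 0, A t)) k p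
      = K * Real.exp (2 * ∫ t in (1:ℝ)..p 0, A t) * (2 * A (p 0))
          * (Pi.single k 1 : Fin 3 → ℝ) 0 := by
  rw [pd, (hFexp A K hd).fderiv]
  simp

private lemma pdExpSin (A : ℝ → ℝ) (L : ℝ) {p : Fin 3 → ℝ}
    (hd : HasDerivAt (fun s => ∫ t in (1:ℝ)..s, A t) (A (p 0)) (p 0)) (k : Fin 3) :
    pd (fun q => L * Real.exp (2 * ∫ t in (1:ℝ)..q 0, A t) * Real.sin (q 1) ^ 2) k p
      = L * Real.exp (2 * ∫ t in (1:ℝ)..p 0, A t) * (2 * A (p 0)) * Real.sin (p 1) ^ 2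
          * (Pi.single k 1 : Fin 3 → ℝ) 0
        + L * Real.exp (2 * ∫ t in (1:ℝ)..p 0, A t)
            * (2 * Real.sin (p 1) * Real.cos (p 1)) * (Pi.single k 1 : Fin 3 → ℝ) 1 := by
  have hF2 : HasFDerivAt (fun q : Fin 3 → ℝ => Real.sin (q 1) ^ 2)
      ((2 * Real.sin (p 1) * Real.cos (p 1)) •
        ContinuousLinearMap.proj (R := ℝ) (φ := fun _ : Fin 3 => ℝ) 1) p := by
    have hs : HasDerivAt (fun s : ℝ => Real.sin s ^ 2)
        (2 * Real.sin (p 1) * Real.cos (p 1)) (p 1) := by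
      have := (Real.hasDerivAt_sin (p 1)).pow 2
      exact this.congr_deriv (by ring)
    have := hs.comp_hasFDerivAt p
      (ContinuousLinearMap.proj (R := ℝ) (φ := fun _ : Fin 3 => ℝ) 1).hasFDerivAt
    exact this
  have hF : HasFDerivAt (fun q => L * Real.exp (2 * ∫ t in (1:ℝ)..q 0, A t) * Real.sin (q 1) ^ 2) _ p :=
    (hFexp A L hd).mul hF2
  rw [pd, hF.fderiv]
  simp
  ring

end Helpers

/-- the connection of Theorem 11 is metrized by the metric of Theorem 12:
the metrizability equations `∂g_{ij}/∂x^k = g_{im}∇^m_{jk} + g_{jm}∇^m_{ik}` hold. -/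
theorem metrizability_equations_hold
    (A111 A212 : ℝ → ℝ)
    (h1 : ContinuousOn A111 (Set.Ioi 0)) (h2 : ContinuousOn A212 (Set.Ioi 0))
    (K L : ℝ) (hK : K ≠ 0) (hL : L ≠ 0) :
    ∀ p ∈ sphDom, ∀ i j k : Fin 3,
      pd (fun q => metrG A111 A212 K L q i j) k p
        = (∑ m, metrG A111 A212 K L p i m * metrConn A111 A212 K L p m j k)
          + (∑ m, metrG A111 A212 K L p j m * metrConn A111 A212 K L p m i k) := by
  intro p hp i j k
  obtain ⟨hr, hϑ, -⟩ := hp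
  have hsin : Real.sin (p 1) ≠ 0 := (Real.sin_pos_of_pos_of_lt_pi hϑ.1 hϑ.2).ne'
  have hI1 := primDeriv A111 h1 hr
  have hI2 := primDeriv A212 h2 hr
  have hexp : Real.exp (2 * ∫ t in (1:ℝ)..p 0, A111 t)
      * Real.exp (2 * ∫ t in (1:ℝ)..p 0, (A212 t - A111 t))
      = Real.exp (2 * ∫ t in (1:ℝ)..p 0, A212 t) := by
    rw [← Real.exp_add, intervalIntegral.integral_sub (intInt A212 h2 hr) (intInt A111 h1 hr)]
    congr 1; ring
  have P00 : ∀ k : Fin 3, pd (fun q => metrG A111 A212 K L q 0 0) k p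
      = K * Real.exp (2 * ∫ t in (1:ℝ)..p 0, A111 t) * (2 * A111 (p 0))
          * (Pi.single k 1 : Fin 3 → ℝ) 0 := by
    intro k
    have e : (fun q => metrG A111 A212 K L q 0 0)
        = fun q : Fin 3 → ℝ => K * Real.exp (2 * ∫ t in (1:ℝ)..q 0, A111 t) := by
      funext q; simp [metrG, Matrix.diagonal_apply]
    rw [e, pdExp A111 K hI1]
  have P11 : ∀ k : Fin 3, pd (fun q => metrG A111 A212 K L q 1 1) k p
      = L * Real.exp (2 * ∫ t in (1:ℝ)..p 0, A212 t) * (2 * A212 (p 0))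
          * (Pi.single k 1 : Fin 3 → ℝ) 0 := by
    intro k
    have e : (fun q => metrG A111 A212 K L q 1 1)
        = fun q : Fin 3 → ℝ => L * Real.exp (2 * ∫ t in (1:ℝ)..q 0, A212 t) := by
      funext q; simp [metrG, Matrix.diagonal_apply]
    rw [e, pdExp A212 L hI2]
  have P22 : ∀ k : Fin 3, pd (fun q => metrG A111 A212 K L q 2 2) k p
      = L * Real.exp (2 * ∫ t in (1:ℝ)..p 0, A212 t) * (2 * A212 (p 0)) * Real.sin (p 1) ^ 2
          * (Pi.single k 1 : Fin 3 → ℝ) 0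
        + L * Real.exp (2 * ∫ t in (1:ℝ)..p 0, A212 t)
            * (2 * Real.sin (p 1) * Real.cos (p 1)) * (Pi.single k 1 : Fin 3 → ℝ) 1 := by
    intro k
    have e : (fun q => metrG A111 A212 K L q 2 2)
        = fun q : Fin 3 → ℝ => L * Real.exp (2 * ∫ t in (1:ℝ)..q 0, A212 t)
            * Real.sin (q 1) ^ 2 := by
      funext q; simp [metrG, Matrix.diagonal_apply]
    rw [e, pdExpSin A212 L hI2]
  have O01 : ∀ k : Fin 3, pd (fun q => metrG A111 A212 K L q 0 1) k p = 0 := by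
    intro k
    have e : (fun q => metrG A111 A212 K L q 0 1) = fun _ : Fin 3 → ℝ => (0:ℝ) := by
      funext q; simp [metrG, Matrix.diagonal_apply]
    rw [e]; exact pd_const 0 k p
  have O10 : ∀ k : Fin 3, pd (fun q => metrG A111 A212 K L q 1 0) k p = 0 := by
    intro k
    have e : (fun q => metrG A111 A212 K L q 1 0) = fun _ : Fin 3 → ℝ => (0:ℝ) := by
      funext q; simp [metrG, Matrix.diagonal_apply]
    rw [e]; exact pd_const 0 k p
  have O02 : ∀ k : Fin 3, pd (fun q => metrG A111 A212 K L q 0 2) k p = 0 := by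
    intro k
    have e : (fun q => metrG A111 A212 K L q 0 2) = fun _ : Fin 3 → ℝ => (0:ℝ) := by
      funext q; simp [metrG, Matrix.diagonal_apply]
    rw [e]; exact pd_const 0 k p
  have O20 : ∀ k : Fin 3, pd (fun q => metrG A111 A212 K L q 2 0) k p = 0 := by
    intro k
    have e : (fun q => metrG A111 A212 K L q 2 0) = fun _ : Fin 3 → ℝ => (0:ℝ) := by
      funext q; simp [metrG, Matrix.diagonal_apply]
    rw [e]; exact pd_const 0 k p
  have O12 : ∀ k : Fin 3, pd (fun q => metrG A111 A212 K L q 1 2) k p = 0 := by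
    intro k
    have e : (fun q => metrG A111 A212 K L q 1 2) = fun _ : Fin 3 → ℝ => (0:ℝ) := by
      funext q; simp [metrG, Matrix.diagonal_apply]
    rw [e]; exact pd_const 0 k p
  have O21 : ∀ k : Fin 3, pd (fun q => metrG A111 A212 K L q 2 1) k p = 0 := by
    intro k
    have e : (fun q => metrG A111 A212 K L q 2 1) = fun _ : Fin 3 → ℝ => (0:ℝ) := by
      funext q; simp [metrG, Matrix.diagonal_apply]
    rw [e]; exact pd_const 0 k p
  have hexp2 : Real.exp ((∫ t in (1:ℝ)..p 0, A212 t) * 2)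
      = Real.exp ((∫ t in (1:ℝ)..p 0, A111 t) * 2)
        * Real.exp ((∫ t in (1:ℝ)..p 0, (A212 t - A111 t)) * 2) := by
    rw [← Real.exp_add, intervalIntegral.integral_sub (intInt A212 h2 hr) (intInt A111 h1 hr)]
    congr 1; ring
  fin_cases i <;> fin_cases j <;> fin_cases k <;>
    simp only [Fin.zero_eta, Fin.mk_one, Fin.reduceFinMk] <;>
    simp only [P00, P11, P22, O01, O10, O02, O20, O12, O21] <;>
    simp [metrG, metrConn, Fin.sum_univ_three, Matrix.diagonal_apply, Pi.single_apply,
      Matrix.vecHead, Matrix.vecTail] <;>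
    try ring
  all_goals (rw [hexp2]; field_simp)
  all_goals ring
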